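/- arXiv:math-ph/0004007 — 2 statements merged into one kernel-verified Lean document; each statement's English description precedes it below -/
import Mathlib

section
/- Let E be a finite-dimensional real normed vector space, X : E → E a continuous vector field, and Φ : ℝ × E → E a flow satisfying Φ(0,z)=z, Φ(t+s,z)=Φ(t,Φ(s,z)), and ∂ₜΦ(t,z)=X(Φ(t,z)) for all t,s,z. Let H₁ : E → M₂(ℂ) be continuous with H₁(z) Hermitian, and let d : E × ℝ → M₂(ℂ) satisfy d(z,0)=1, ∂ₜd(z,t) = -i·H₁(Φ(t,z))·d(z,t), and the cocycle property d(z,t+s) = d(Φ(t,z),s)·d(z,t). Let B₀ : E → M₂(ℂ) be continuously differentiable, and define B(t,z) := d(z,t)*·B₀(Φ(t,z))·d(z,t). Assume that for each t the map z ↦ B(t,z) is differentiable. Then B solves the matrix transport equation ∂ₜB(t,z) = (D_z B(t,·))(z)[X(z)] + i·[H₁(z), B(t,z)] for all t and z, where D_z denotes the Fréchet derivative in z and [X,Y] := XY − YX. -/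
attribute [local instance] Matrix.normedAddCommGroup Matrix.normedSpace

open Matrix

noncomputable abbrev M2 := Matrix (Fin 2) (Fin 2) ℂ

noncomputable def mulCLM : M2 →L[ℝ] M2 →L[ℝ] M2 :=
  LinearMap.toContinuousLinearMap
    { toFun := fun a => LinearMap.toContinuousLinearMap (LinearMap.mul ℝ M2 a)
      map_add' := by intros; ext; simp [add_mul]
      map_smul' := by intros; ext; simp [smul_mul_assoc] }

@[simp] lemma mulCLM_apply (a b : M2) : mulCLM a b = a * b := rfl

noncomputable def ctCLM : M2 →L[ℝ] M2 :=
  LinearMap.toContinuousLinearMap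
    { toFun := conjTranspose
      map_add' := by intros; simp
      map_smul' := by
        intro r A
        ext i j
        simp [Matrix.conjTranspose_apply, star_smul] }

@[simp] lemma ctCLM_apply (a : M2) : ctCLM a = aᴴ := rfl

lemma hasDerivAt_mul' {f g : ℝ → M2} {f' g' : M2} {t : ℝ}
    (hf : HasDerivAt f f' t) (hg : HasDerivAt g g' t) :
    HasDerivAt (fun s => f s * g s) (f' * g t + f t * g') t := by
  have h := (mulCLM.isBoundedBilinearMap.hasFDerivAt (f t, g t)).comp_hasDerivAt t (hf.prodMk hg)
  rw [add_comm]
  exact h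

lemma hasDerivAt_ct {f : ℝ → M2} {f' : M2} {t : ℝ} (hf : HasDerivAt f f' t) :
    HasDerivAt (fun s => (f s)ᴴ) f'ᴴ t := by
  exact (ctCLM.hasFDerivAt.comp_hasDerivAt t hf)

/-- **Leading-order Egorov property / matrix transport equation.**
Let `X` be a continuous vector field on a finite-dimensional real normed space `E`
with flow `Φ`, let `H₁ : E → M₂(ℂ)` be continuous Hermitian, and let `d` be the spin
transport matrix along the flow (with cocycle property).  If `B₀ : E → M₂(ℂ)` is `C¹`
and `B t z := (d z t)ᴴ * B₀ (Φ t z) * d z t` is differentiable in `z` for each `t`,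
then `B` solves `∂ₜ B(t,z) = (D_z B(t,·))(z)[X z] + i [H₁ z, B(t,z)]`. -/
theorem egorov_transport_equation
    {E : Type*} [NormedAddCommGroup E] [NormedSpace ℝ E] [FiniteDimensional ℝ E]
    (X : E → E) (hX : Continuous X)
    (Φ : ℝ → E → E)
    (hΦ0 : ∀ z, Φ 0 z = z)
    (hΦgrp : ∀ t s z, Φ (t + s) z = Φ t (Φ s z))
    (hΦder : ∀ t z, HasDerivAt (fun τ => Φ τ z) (X (Φ t z)) t)
    (H₁ : E → Matrix (Fin 2) (Fin 2) ℂ)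
    (hH₁cont : Continuous H₁)
    (hH₁herm : ∀ z, (H₁ z)ᴴ = H₁ z)
    (d : E → ℝ → Matrix (Fin 2) (Fin 2) ℂ)
    (hd0 : ∀ z, d z 0 = 1)
    (hdder : ∀ z t, HasDerivAt (d z) ((-Complex.I) • (H₁ (Φ t z) * d z t)) t)
    (hcocycle : ∀ z t s, d z (t + s) = d (Φ t z) s * d z t)
    (B₀ : E → Matrix (Fin 2) (Fin 2) ℂ) (hB₀ : ContDiff ℝ 1 B₀)
    (B : ℝ → E → Matrix (Fin 2) (Fin 2) ℂ)
    (hB : ∀ t z, B t z = (d z t)ᴴ * B₀ (Φ t z) * d z t)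
    (hBdiff : ∀ t, Differentiable ℝ (B t)) :
    ∀ t z, HasDerivAt (fun τ => B τ z)
      (fderiv ℝ (B t) z (X z) + Complex.I • (H₁ z * B t z - B t z * H₁ z)) t := by
  intro t z
  -- key identity: B (s + t) z = (d z s)ᴴ * B t (Φ s z) * d z s
  have key : ∀ s : ℝ, B (s + t) z = (d z s)ᴴ * B t (Φ s z) * d z s := by
    intro s
    rw [hB, hB, hcocycle, add_comm s t, hΦgrp, conjTranspose_mul]
    noncomm_ring
  -- derivative of d z at 0
  have hd' : HasDerivAt (d z) ((-Complex.I) • H₁ z) 0 := by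
    have := hdder z 0
    rwa [hΦ0, hd0, mul_one] at this
  -- derivative of (d z ·)ᴴ at 0
  have hct' : HasDerivAt (fun s => (d z s)ᴴ) (Complex.I • H₁ z) 0 := by
    have := hasDerivAt_ct hd'
    rwa [conjTranspose_smul, star_neg, Complex.star_def, Complex.conj_I, neg_neg,
      hH₁herm] at this
  -- derivative of s ↦ Φ s z at 0
  have hΦ' : HasDerivAt (fun s => Φ s z) (X z) 0 := by
    have := hΦder 0 z; rwa [hΦ0] at this
  -- derivative of s ↦ B t (Φ s z) at 0
  have hBc : HasDerivAt (fun s => B t (Φ s z)) (fderiv ℝ (B t) z (X z)) 0 := by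
    have h1 : HasFDerivAt (B t) (fderiv ℝ (B t) z) (Φ 0 z) := by
      rw [hΦ0]; exact (hBdiff t z).hasFDerivAt
    exact h1.comp_hasDerivAt 0 hΦ'
  -- derivative of the product at 0
  have hprod : HasDerivAt (fun s => (d z s)ᴴ * B t (Φ s z) * d z s)
      (fderiv ℝ (B t) z (X z) + Complex.I • (H₁ z * B t z - B t z * H₁ z)) 0 := by
    have h := hasDerivAt_mul' (hasDerivAt_mul' hct' hBc) hd'
    rw [hΦ0, hd0] at h
    simp only [conjTranspose_one, one_mul, mul_one] at h
    convert h using 1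
    rw [smul_mul_assoc, mul_smul_comm, neg_smul, smul_sub]
    abel
  -- shift: derivative at t
  have feq : (fun s => B (s + t) z) = fun s => (d z s)ᴴ * B t (Φ s z) * d z s := funext key
  have hg : HasDerivAt (fun s => B (s + t) z)
      (fderiv ℝ (B t) z (X z) + Complex.I • (H₁ z * B t z - B t z * H₁ z)) 0 := by
    rw [feq]; exact hprod
  have hsub : HasDerivAt (fun τ : ℝ => τ - t) 1 t := by
    simpa using (hasDerivAt_id t).sub_const t
  have hcomp := hg.scomp_of_eq t hsub (by simp)
  have hfun : ((fun s => B (s + t) z) ∘ fun τ => τ - t) = fun τ => B τ z := by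
    funext τ; simp
  rwa [hfun, one_smul] at hcomp
end

section
/- Let H : ℝ → M_n(ℂ) be continuous. For each t₀ ∈ ℝ let d_{t₀} : ℝ → M_n(ℂ) be a differentiable map with d_{t₀}(0) = 1 and d_{t₀}'(s) = -i·H(t₀+s)·d_{t₀}(s) for all s. Then for every t ∈ ℝ the matrix d₀(t) is invertible, and its inverse is d_t(−t), i.e. d_t(−t)·d₀(t) = 1 = d₀(t)·d_t(−t). -/
set_option maxHeartbeats 1000000

attribute [local instance] Matrix.normedAddCommGroup Matrix.normedSpace

open Matrix

/-- **Invertibility of the spin transport matrix.**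
Let `H : ℝ → Mₙ(ℂ)` be continuous and, for each `t₀`, let `d t₀ : ℝ → Mₙ(ℂ)` solve the
spin transport equation started at time `t₀`, i.e. `d t₀ 0 = 1` and
`(d t₀)' s = -i • (H (t₀ + s) * d t₀ s)`.  Then `d 0 t` is invertible with inverse
`d t (-t)`. -/
theorem spin_transport_invertible {n : ℕ}
    (H : ℝ → Matrix (Fin n) (Fin n) ℂ)
    (hHcont : Continuous H)
    (d : ℝ → ℝ → Matrix (Fin n) (Fin n) ℂ)
    (hd0 : ∀ t₀ : ℝ, d t₀ 0 = 1)
    (hd : ∀ t₀ s : ℝ, HasDerivAt (d t₀) ((-Complex.I) • (H (t₀ + s) * d t₀ s)) s) :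
    ∀ t : ℝ, IsUnit (d 0 t) ∧ d t (-t) * d 0 t = 1 ∧ d 0 t * d t (-t) = 1 := by
  intro t
  -- key claim: d t (-t) * d 0 t = 1
  have key : d t (-t) * d 0 t = 1 := by
    set a : ℝ := min (-t) 0 - 1 with ha
    set b : ℝ := max (-t) 0 + 1 with hb
    have hab : a ≤ b := by
      have h1 : min (-t) 0 ≤ max (-t) 0 := le_trans (min_le_right _ _) (le_max_right _ _)
      simp only [ha, hb]; linarith
    -- clamp function
    set c : ℝ → ℝ := fun s => max a (min s b) with hc
    have hc_mem : ∀ s, c s ∈ Set.Icc a b := fun s =>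
      ⟨le_max_left _ _, max_le hab (min_le_right _ _)⟩
    have hc_eq : ∀ s ∈ Set.Icc a b, c s = s := by
      intro s hs
      simp only [hc]
      rw [min_eq_left hs.2, max_eq_right hs.1]
    -- left-multiplication as a continuous linear map, linearly in the matrix
    set L : Matrix (Fin n) (Fin n) ℂ →ₗ[ℂ]
        (@ContinuousLinearMap ℂ ℂ _ _ (RingHom.id ℂ) (Matrix (Fin n) (Fin n) ℂ)
          (inferInstance : NormedAddCommGroup (Matrix (Fin n) (Fin n) ℂ)).toUniformSpace.toTopologicalSpace
          _ (Matrix (Fin n) (Fin n) ℂ)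
          (inferInstance : NormedAddCommGroup (Matrix (Fin n) (Fin n) ℂ)).toUniformSpace.toTopologicalSpace
          _ _ _) :=
      (LinearMap.toContinuousLinearMap.toLinearMap).comp
        (LinearMap.mul ℂ (Matrix (Fin n) (Fin n) ℂ)) with hL
    have hLapp : ∀ (A X : Matrix (Fin n) (Fin n) ℂ), L A X = A * X := fun A X => rfl
    have hLcont : Continuous L := L.continuous_of_finiteDimensional
    -- bound on the interval
    have hcont : Continuous fun s : ℝ => ‖L (H (t + s))‖ :=
      (hLcont.comp (hHcont.comp (continuous_add_left t))).norm
    obtain ⟨s₀, hs₀mem, hs₀⟩ :=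
      isCompact_Icc.exists_isMaxOn (Set.nonempty_Icc.2 hab) hcont.continuousOn
    set K : NNReal := ‖L (H (t + s₀))‖₊ with hK
    -- the vector field
    set v : ℝ → Matrix (Fin n) (Fin n) ℂ → Matrix (Fin n) (Fin n) ℂ :=
      fun s y => (-Complex.I) • (H (t + c s) * y) with hv
    have hvlip : ∀ s, LipschitzOnWith K (v s) Set.univ := by
      intro s
      have h1 : v s = fun y => ((-Complex.I) • L (H (t + c s))) y := by
        funext y
        simp [hv, hLapp]
      rw [h1]
      refine (((-Complex.I) • L (H (t + c s))).lipschitz.weaken ?_).lipschitzOnWith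
      have h2 : ‖(-Complex.I) • L (H (t + c s))‖ ≤ ‖L (H (t + s₀))‖ := by
        rw [norm_smul (-Complex.I) (L (H (t + c s)))]
        simp only [norm_neg, Complex.norm_I, one_mul]
        exact hs₀ (hc_mem s)
      exact_mod_cast h2
    -- the two solutions
    set f : ℝ → Matrix (Fin n) (Fin n) ℂ := fun s => d t s * d 0 t with hf
    set g : ℝ → Matrix (Fin n) (Fin n) ℂ := fun s => d 0 (t + s) with hg
    -- derivative of f
    have hf' : ∀ s ∈ Set.Ioo a b, HasDerivAt f (v s (f s)) s := by
      intro s hs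
      set R := (LinearMap.toContinuousLinearMap
        (LinearMap.mulRight ℂ (d 0 t))).restrictScalars ℝ with hR
      have h1 : HasDerivAt f (R ((-Complex.I) • (H (t + s) * d t s))) s :=
        R.hasFDerivAt.comp_hasDerivAt s (hd t s)
      have h2 : R ((-Complex.I) • (H (t + s) * d t s)) = v s (f s) := by
        show ((-Complex.I) • (H (t + s) * d t s)) * d 0 t = v s (f s)
        simp only [hv, hf, smul_mul_assoc, mul_assoc]
        rw [hc_eq s (Set.Ioo_subset_Icc_self hs)]
      rwa [h2] at h1
    -- derivative of g
    have hg' : ∀ s ∈ Set.Ioo a b, HasDerivAt g (v s (g s)) s := by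
      intro s hs
      have h1 : HasDerivAt (fun s : ℝ => t + s) 1 s := (hasDerivAt_id s).const_add t
      have h2 := (hd 0 (t + s)).scomp s h1
      simp only [one_smul] at h2
      have h3 : (-Complex.I) • (H (0 + (t + s)) * d 0 (t + s)) = v s (g s) := by
        simp only [hv, hg, zero_add]
        rw [hc_eq s (Set.Ioo_subset_Icc_self hs)]
      rwa [h3] at h2
    have heq : f 0 = g 0 := by
      simp [hf, hg, hd0 t]
    have h0mem : (0 : ℝ) ∈ Set.Ioo a b := by
      constructor
      · have : min (-t) 0 ≤ 0 := min_le_right _ _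
        simp only [ha]; linarith
      · have : (0:ℝ) ≤ max (-t) 0 := le_max_right _ _
        simp only [hb]; linarith
    have hmt : (-t : ℝ) ∈ Set.Ioo a b := by
      constructor
      · have : min (-t) 0 ≤ -t := min_le_left _ _
        simp only [ha]; linarith
      · have : -t ≤ max (-t) 0 := le_max_left _ _
        simp only [hb]; linarith
    have huniq := ODE_solution_unique_of_mem_Ioo (s := fun _ => Set.univ) (fun s _ => hvlip s) h0mem
      (fun s hs => ⟨hf' s hs, Set.mem_univ _⟩)
      (fun s hs => ⟨hg' s hs, Set.mem_univ _⟩) heq hmt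
    have hgmt : g (-t) = 1 := by simp [hg, hd0 0]
    rw [← hgmt]
    exact huniq
  have key2 : d 0 t * d t (-t) = 1 := mul_eq_one_comm.mp key
  exact ⟨⟨⟨d 0 t, d t (-t), key2, key⟩, rfl⟩, key, key2⟩
end
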